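/- Let X and Y be nonzero complex Banach spaces, let S, T ∈ B(X) be not both zero, let Q ∈ B(Y) be nonzero, and let n ≥ 1. Then the following are equivalent in the algebraic tensor product B(X) ⊗ B(Y): (a) S⊗I_Y + I_X⊗Q is a strict left n-inverse of T⊗I_Y; (b) there exist positive integers l, m with l + m = n + 1 and λ ∈ ℂ such that S + λI_X is a strict left l-inverse of T in B(X), and Q − λI_Y is nilpotent of order exactly m, i.e. (Q − λI_Y)^m = 0 and (Q − λI_Y)^{m−1} ≠ 0. -/

import Mathlib

open scoped TensorProduct

/-- `β_n(S,T) = Σ_{k=0}^n (−1)^{n−k} C(n,k) S^k T^k`. -/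
noncomputable def beta {A : Type*} [Ring A] (n : ℕ) (S T : A) : A :=
  ∑ k ∈ Finset.range (n + 1), ((-1 : ℤ) ^ (n - k) * (n.choose k : ℤ)) • (S ^ k * T ^ k)

section BetaBasic
variable {A : Type*} [Ring A] [Algebra ℂ A]

/-- `Lop S T : W ↦ S * W * T`. -/
noncomputable def Lop (S T : A) : Module.End ℂ A :=
  LinearMap.mulLeft ℂ S * LinearMap.mulRight ℂ T

lemma Lop_apply (S T x : A) : Lop S T x = S * (x * T) := rfl

lemma Lop_pow_one (S T : A) (k : ℕ) : ((Lop S T) ^ k) 1 = S ^ k * T ^ k := by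
  induction k with
  | zero => simp
  | succ k ih =>
    rw [pow_succ', Module.End.mul_apply, ih, Lop_apply, pow_succ' S, pow_succ T]
    simp [mul_assoc]

lemma beta_eq (n : ℕ) (S T : A) : beta n S T = ((Lop S T - 1) ^ n) 1 := by
  have hc : Commute (Lop S T) (-1 : Module.End ℂ A) := Commute.neg_one_right (Lop S T)
  rw [sub_eq_add_neg, hc.add_pow]
  rw [LinearMap.sum_apply]
  unfold beta
  refine Finset.sum_congr rfl fun k hk => ?_
  rw [Module.End.mul_apply, Module.End.mul_apply]
  have h1 : ((n.choose k : Module.End ℂ A)) 1 = (n.choose k : ℤ) • (1 : A) := by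
    rw [Module.End.natCast_apply]; simp
  rw [h1]
  have h2 : ((-1 : Module.End ℂ A) ^ (n - k)) ((n.choose k : ℤ) • (1 : A))
      = ((-1 : ℤ) ^ (n - k) * (n.choose k : ℤ)) • (1 : A) := by
    have : (-1 : Module.End ℂ A) ^ (n - k) = (((-1 : ℤ) ^ (n - k) : ℤ) : Module.End ℂ A) := by
      push_cast; ring
    rw [this, Module.End.intCast_apply, smul_smul]
  rw [h2, map_zsmul, Lop_pow_one]

omit [Algebra ℂ A] in
lemma beta_zero (S T : A) : beta 0 S T = 1 := by simp [beta]

lemma beta_succ (n : ℕ) (S T : A) :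
    beta (n + 1) S T = S * beta n S T * T - beta n S T := by
  rw [beta_eq, beta_eq, pow_succ', Module.End.mul_apply]
  rw [LinearMap.sub_apply, Lop_apply, Module.End.one_apply, mul_assoc]

end BetaBasic

section More
variable {A : Type*} [Ring A] [Algebra ℂ A]

lemma beta_add_right (l k : ℕ) (S T : A) (h : beta l S T = 0) : beta (l + k) S T = 0 := by
  induction k with
  | zero => simpa using h
  | succ k ih => rw [← Nat.add_assoc, beta_succ, ih]; simp

lemma beta_le_zero {l j : ℕ} (S T : A) (h : beta l S T = 0) (hj : l ≤ j) : beta j S T = 0 := by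
  obtain ⟨k, rfl⟩ := Nat.exists_eq_add_of_le hj
  exact beta_add_right l k S T h

lemma beta_pred_pump (l : ℕ) (S T : A) (h : beta (l + 1) S T = 0) (k : ℕ) :
    beta l S T = S ^ k * (beta l S T * T ^ k) := by
  have h1 : beta l S T = S * (beta l S T * T) := by
    have := beta_succ l S T
    rw [h] at this
    have h2 := sub_eq_zero.mp this.symm
    conv_lhs => rw [← h2]
    rw [mul_assoc]
  induction k with
  | zero => simp
  | succ k ih =>
    calc beta l S T = S ^ k * (beta l S T * T ^ k) := ih
    _ = S ^ k * ((S * (beta l S T * T)) * T ^ k) := by rw [← h1]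
    _ = S ^ (k+1) * (beta l S T * T ^ (k+1)) := by
        rw [pow_succ S, pow_succ' T]
        noncomm_ring

lemma exists_left_inv (l : ℕ) (S T : A) (h : beta (l + 1) S T = 0) :
    ∃ G : A, G * T = 1 := by
  have key : beta (l+1) S T = (∑ i ∈ Finset.range (l + 1),
      ((-1:ℤ)^(l-i) * ((l+1).choose (i+1) :ℤ)) • (S^(i+1) * T^i)) * T
      + ((-1:ℤ)^(l+1)) • (1:A) := by
    unfold beta
    rw [Finset.sum_range_succ', Finset.sum_mul]
    congr 1
    · refine Finset.sum_congr rfl fun i hi => ?_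
      rw [smul_mul_assoc, mul_assoc, ← pow_succ T, Nat.succ_sub_succ]
    · simp
  rw [h] at key
  have hWT : (∑ i ∈ Finset.range (l + 1),
      ((-1:ℤ)^(l-i) * ((l+1).choose (i+1) :ℤ)) • (S^(i+1) * T^i)) * T
      = -(((-1:ℤ)^(l+1)) • (1:A)) := by
    rw [eq_neg_iff_add_eq_zero]
    exact key.symm
  refine ⟨-(((-1:ℤ)^(l+1)) • (∑ i ∈ Finset.range (l + 1),
      ((-1:ℤ)^(l-i) * ((l+1).choose (i+1) :ℤ)) • (S^(i+1) * T^i))), ?_⟩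
  rw [neg_mul, smul_mul_assoc, hWT, smul_neg, neg_neg, smul_smul, ← pow_add,
    Even.neg_one_pow ⟨l+1, by ring⟩, one_smul]

omit [Algebra ℂ A] in
lemma left_inv_pow (G T : A) (h : G * T = 1) (k : ℕ) : G ^ k * T ^ k = 1 := by
  induction k with
  | zero => simp
  | succ k ih =>
    rw [pow_succ G, pow_succ' T, mul_assoc, ← mul_assoc G T, h, one_mul, ih]

end More

section Tensor
variable {A B : Type*} [Ring A] [Ring B] [Algebra ℂ A] [Algebra ℂ B]

lemma tensor_shift (S : A) (Q : B) (lam : ℂ) :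
    S ⊗ₜ[ℂ] (1 : B) + (1 : A) ⊗ₜ[ℂ] Q
      = (S + lam • 1) ⊗ₜ[ℂ] (1 : B) + (1 : A) ⊗ₜ[ℂ] (Q - lam • 1) := by
  rw [TensorProduct.add_tmul, TensorProduct.tmul_sub, TensorProduct.smul_tmul]
  abel

lemma Rm_pow_one (T : A) (Q' : B) (j : ℕ) :
    ((Lop ((1 : A) ⊗ₜ[ℂ] Q') (T ⊗ₜ[ℂ] (1 : B))) ^ j) (1 : A ⊗[ℂ] B)
      = (T ^ j) ⊗ₜ[ℂ] (Q' ^ j) := by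
  induction j with
  | zero => simp [Algebra.TensorProduct.one_def]
  | succ j ih =>
    rw [pow_succ', Module.End.mul_apply, ih, Lop_apply,
      Algebra.TensorProduct.tmul_mul_tmul, Algebra.TensorProduct.tmul_mul_tmul]
    rw [one_mul, mul_one, ← pow_succ T, ← pow_succ' Q']

lemma P_pow_tmul (S' T : A) (k : ℕ) (x : A) (v : B) :
    ((Lop (S' ⊗ₜ[ℂ] (1 : B)) (T ⊗ₜ[ℂ] (1 : B)) - 1) ^ k) (x ⊗ₜ[ℂ] v)
      = (((Lop S' T - 1) ^ k) x) ⊗ₜ[ℂ] v := by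
  induction k with
  | zero => simp
  | succ k ih =>
    rw [pow_succ', Module.End.mul_apply, ih, pow_succ', Module.End.mul_apply]
    rw [LinearMap.sub_apply, LinearMap.sub_apply, Module.End.one_apply, Module.End.one_apply,
      Lop_apply, Lop_apply, Algebra.TensorProduct.tmul_mul_tmul,
      Algebra.TensorProduct.tmul_mul_tmul, one_mul, mul_one, TensorProduct.sub_tmul]

lemma Lop_pow_T (S T : A) (k j : ℕ) :
    ((Lop S T - 1) ^ k) (T ^ j) = beta k S T * T ^ j := by
  have hc : Commute (Lop S T - 1) (LinearMap.mulRight ℂ (T ^ j)) := by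
    have h1 : Commute (Lop S T) (LinearMap.mulRight ℂ (T ^ j)) := by
      apply LinearMap.ext
      intro w
      simp only [Module.End.mul_apply, Lop_apply, LinearMap.mulRight_apply]
      rw [mul_assoc, mul_assoc, (Commute.pow_self T j).eq, mul_assoc]
    exact h1.sub_left (Commute.one_left _)
  have h2 := (hc.pow_left k).eq
  have h3 := congrArg (fun f : Module.End ℂ A => f 1) h2
  simp only [Module.End.mul_apply, LinearMap.mulRight_apply, one_mul] at h3
  rw [h3, ← beta_eq]

lemma Lop_add_left (a b c : A) : Lop (a + b) c = Lop a c + Lop b c := by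
  apply LinearMap.ext
  intro w
  simp [Lop_apply, add_mul]

/-- The key tensor expansion. -/
lemma beta_tensor_expand (n : ℕ) (S' T : A) (Q' : B) :
    beta n (S' ⊗ₜ[ℂ] (1 : B) + (1 : A) ⊗ₜ[ℂ] Q') (T ⊗ₜ[ℂ] (1 : B))
      = ∑ k ∈ Finset.range (n + 1),
          (n.choose k) • ((beta k S' T * T ^ (n - k)) ⊗ₜ[ℂ] (Q' ^ (n - k))) := by
  set P := Lop (S' ⊗ₜ[ℂ] (1 : B)) (T ⊗ₜ[ℂ] (1 : B)) with hP
  set Rm := Lop ((1 : A) ⊗ₜ[ℂ] Q') (T ⊗ₜ[ℂ] (1 : B)) with hRm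
  have hPR : Commute P Rm := by
    apply LinearMap.ext
    intro w
    simp only [Module.End.mul_apply, Lop_apply, hP, hRm]
    have h1 : (S' ⊗ₜ[ℂ] (1 : B)) * (((1 : A) ⊗ₜ[ℂ] Q') * (w * T ⊗ₜ[ℂ] (1 : B)) * (T ⊗ₜ[ℂ] (1:B)))
        = ((1 : A) ⊗ₜ[ℂ] Q') * ((S' ⊗ₜ[ℂ] (1 : B)) * (w * T ⊗ₜ[ℂ] (1 : B)) * (T ⊗ₜ[ℂ] (1:B))) := by
      have hcomm : (S' ⊗ₜ[ℂ] (1 : B)) * ((1 : A) ⊗ₜ[ℂ] Q') = ((1 : A) ⊗ₜ[ℂ] Q') * (S' ⊗ₜ[ℂ] (1 : B)) := by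
        rw [Algebra.TensorProduct.tmul_mul_tmul, Algebra.TensorProduct.tmul_mul_tmul]
        rw [one_mul, mul_one, one_mul, mul_one]
      calc (S' ⊗ₜ[ℂ] (1 : B)) * (((1 : A) ⊗ₜ[ℂ] Q') * (w * T ⊗ₜ[ℂ] (1 : B)) * (T ⊗ₜ[ℂ] (1:B)))
          = ((S' ⊗ₜ[ℂ] (1 : B)) * ((1 : A) ⊗ₜ[ℂ] Q')) * ((w * T ⊗ₜ[ℂ] (1 : B)) * (T ⊗ₜ[ℂ] (1:B))) := by
            noncomm_ring
        _ = (((1 : A) ⊗ₜ[ℂ] Q') * (S' ⊗ₜ[ℂ] (1 : B))) * ((w * T ⊗ₜ[ℂ] (1 : B)) * (T ⊗ₜ[ℂ] (1:B))) := by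
            rw [hcomm]
        _ = ((1 : A) ⊗ₜ[ℂ] Q') * ((S' ⊗ₜ[ℂ] (1 : B)) * (w * T ⊗ₜ[ℂ] (1 : B)) * (T ⊗ₜ[ℂ] (1:B))) := by
            noncomm_ring
    convert h1 using 2 <;> noncomm_ring
  have hsplit : Lop (S' ⊗ₜ[ℂ] (1 : B) + (1 : A) ⊗ₜ[ℂ] Q') (T ⊗ₜ[ℂ] (1 : B)) - 1
      = (P - 1) + Rm := by
    rw [Lop_add_left]; abel
  rw [beta_eq, hsplit, ((hPR.sub_left (Commute.one_left Rm)).add_pow), LinearMap.sum_apply]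
  refine Finset.sum_congr rfl fun k hk => ?_
  rw [Module.End.mul_apply, Module.End.mul_apply, Module.End.natCast_apply,
    map_nsmul, map_nsmul, hRm, hP, Rm_pow_one, P_pow_tmul, Lop_pow_T]

end Tensor

section Helpers

/-- Apply a functional to the left leg of a tensor. -/
noncomputable def applyL {E F : Type*} [AddCommGroup E] [Module ℂ E] [AddCommGroup F]
    [Module ℂ F] (g : E →ₗ[ℂ] ℂ) : E ⊗[ℂ] F →ₗ[ℂ] F :=
  (TensorProduct.lid ℂ F).toLinearMap.comp (LinearMap.rTensor F g)

lemma applyL_tmul {E F : Type*} [AddCommGroup E] [Module ℂ E] [AddCommGroup F]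
    [Module ℂ F] (g : E →ₗ[ℂ] ℂ) (x : E) (y : F) :
    applyL g (x ⊗ₜ[ℂ] y) = g x • y := by
  simp [applyL]

lemma tmul_ne_zero {E F : Type*} [NormedAddCommGroup E] [NormedSpace ℂ E]
    [NormedAddCommGroup F] [NormedSpace ℂ F] {u : E} {v : F} (hu : u ≠ 0) (hv : v ≠ 0) :
    u ⊗ₜ[ℂ] v ≠ 0 := by
  obtain ⟨φ, -, hφ⟩ := exists_dual_vector ℂ u (norm_ne_zero_iff.mpr hu)
  obtain ⟨ψ, -, hψ⟩ := exists_dual_vector ℂ v (norm_ne_zero_iff.mpr hv)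
  intro h
  have h2 := congrArg (applyL (E := E) (F := F) (φ : E →L[ℂ] ℂ).toLinearMap) h
  rw [applyL_tmul, map_zero] at h2
  simp only [ContinuousLinearMap.coe_coe] at h2
  rw [hφ] at h2
  have hu' : (‖u‖ : ℂ) ≠ 0 := by
    simpa using norm_ne_zero_iff.mpr hu
  exact hv ((smul_eq_zero.mp h2).resolve_left hu')

lemma isUnit_of_poly_rev {B : Type*} [Ring B] [Algebra ℂ B] (M : B) (K : ℕ) (a : ℕ → ℂ)
    (h : ∑ k ∈ Finset.range (K + 1), a k • M ^ (K - k) = 0) (haK : a K ≠ 0) : IsUnit M := by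
  rw [Finset.sum_range_succ] at h
  have hKK : a K • M ^ (K - K) = a K • (1 : B) := by rw [Nat.sub_self, pow_zero]
  rw [hKK] at h
  set u : B := (-(a K)⁻¹) • ∑ k ∈ Finset.range K, a k • M ^ (K - 1 - k) with hu
  have hMu : M * u = 1 := by
    rw [hu, mul_smul_comm, Finset.mul_sum]
    have : ∀ k ∈ Finset.range K, M * (a k • M ^ (K - 1 - k)) = a k • M ^ (K - k) := by
      intro k hk
      rw [Finset.mem_range] at hk
      rw [mul_smul_comm, ← pow_succ']
      congr 2
      omega
    rw [Finset.sum_congr rfl this]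
    have hs : ∑ k ∈ Finset.range K, a k • M ^ (K - k) = -(a K • (1 : B)) := by
      rw [eq_neg_iff_add_eq_zero]; exact h
    rw [hs]
    simp [smul_smul, inv_mul_cancel₀ haK]
  have huM : u * M = 1 := by
    rw [hu, smul_mul_assoc, Finset.sum_mul]
    have : ∀ k ∈ Finset.range K, (a k • M ^ (K - 1 - k)) * M = a k • M ^ (K - k) := by
      intro k hk
      rw [Finset.mem_range] at hk
      rw [smul_mul_assoc, ← pow_succ]
      congr 2
      omega
    rw [Finset.sum_congr rfl this]
    have hs : ∑ k ∈ Finset.range K, a k • M ^ (K - k) = -(a K • (1 : B)) := by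
      rw [eq_neg_iff_add_eq_zero]; exact h
    rw [hs]
    simp [smul_smul, inv_mul_cancel₀ haK]
  exact ⟨⟨M, u, hMu, huM⟩, rfl⟩

lemma pow_zero_of_le {B : Type*} [MonoidWithZero B] {N : B} {m : ℕ}
    (hNm : N ^ m = 0) {j : ℕ} (hj : m ≤ j) : N ^ j = 0 := by
  obtain ⟨t, rfl⟩ := Nat.exists_eq_add_of_le hj
  rw [pow_add, hNm, zero_mul]

lemma pow_eq_zero_of_aeval {B : Type*} [Ring B] [Algebra ℂ B] (N : B) (m : ℕ)
    (hunit : ∀ ρ : ℂ, ρ ≠ 0 → IsUnit (algebraMap ℂ B ρ - N)) :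
    ∀ d : ℕ, ∀ r : Polynomial ℂ, r.natDegree ≤ d → r.coeff 0 ≠ 0 →
      N ^ m * Polynomial.aeval N r = 0 → N ^ m = 0 := by
  intro d
  induction d with
  | zero =>
    intro r hd h0 hval
    rw [Polynomial.eq_C_of_natDegree_le_zero hd] at hval
    rw [Polynomial.aeval_C, Algebra.algebraMap_eq_smul_one, mul_smul_comm, mul_one] at hval
    exact (smul_eq_zero.mp hval).resolve_left h0
  | succ d ih =>
    intro r hd h0 hval
    rcases Nat.eq_zero_or_pos r.natDegree with hdeg | hdeg
    · rw [Polynomial.eq_C_of_natDegree_eq_zero hdeg] at hval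
      rw [Polynomial.aeval_C, Algebra.algebraMap_eq_smul_one, mul_smul_comm, mul_one] at hval
      exact (smul_eq_zero.mp hval).resolve_left h0
    · have hdeg' : r.degree ≠ 0 := by
        intro hcon
        rw [Polynomial.degree_eq_natDegree (fun h => by simp [h] at h0)] at hcon
        have h00 : r.natDegree = 0 := by exact_mod_cast hcon
        omega
      obtain ⟨ρ, hρ⟩ := Complex.isAlgClosed.exists_root r hdeg'
      have hρ0 : ρ ≠ 0 := by
        intro hcon
        rw [hcon] at hρ
        rw [Polynomial.IsRoot, ← Polynomial.coeff_zero_eq_eval_zero] at hρ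
        exact h0 hρ
      obtain ⟨r₁, hr₁⟩ := Polynomial.dvd_iff_isRoot.mpr hρ
      have hr₁' : r = r₁ * (Polynomial.X - Polynomial.C ρ) := by rw [hr₁]; ring
      have hc1 : r₁.coeff 0 ≠ 0 := by
        intro hcon
        apply h0
        rw [hr₁', Polynomial.mul_coeff_zero, hcon, zero_mul]
      have hr₁ne : r₁ ≠ 0 := fun hcon => hc1 (by rw [hcon]; simp)
      have hdeg1 : r₁.natDegree ≤ d := by
        have := Polynomial.natDegree_mul hr₁ne (Polynomial.X_sub_C_ne_zero ρ)
        rw [← hr₁'] at this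
        rw [Polynomial.natDegree_X_sub_C] at this
        omega
      apply ih r₁ hdeg1 hc1
      have hval' : (N ^ m * Polynomial.aeval N r₁) * (N - algebraMap ℂ B ρ) = 0 := by
        have heq : Polynomial.aeval N r = Polynomial.aeval N r₁ * (N - algebraMap ℂ B ρ) := by
          rw [hr₁', map_mul, map_sub, Polynomial.aeval_X, Polynomial.aeval_C]
        rw [heq, ← mul_assoc] at hval
        exact hval
      have hUnit : IsUnit (N - algebraMap ℂ B ρ) := by
        simpa [neg_sub] using (hunit ρ hρ0).neg
      exact (hUnit.mul_left_eq_zero).mp hval'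

end Helpers

section TwoShifts
variable {A : Type*} [Ring A] [Algebra ℂ A]

lemma shift_comm (S : A) (l1 l2 : ℂ) :
    (S + l1 • 1) * (S + l2 • 1) = (S + l2 • 1) * (S + l1 • 1) := by
  simp only [mul_add, add_mul, smul_mul_assoc, mul_smul_comm, one_mul, mul_one, smul_add,
    smul_smul, mul_comm l1 l2]
  abel

lemma Lop_comm_of_comm (S1 S2 T : A) (h : S1 * S2 = S2 * S1) :
    Commute (Lop S1 T) (Lop S2 T) := by
  apply LinearMap.ext
  intro w
  simp only [Module.End.mul_apply, Lop_apply]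
  calc S1 * (S2 * (w * T) * T) = (S1 * S2) * ((w * T) * T) := by noncomm_ring
    _ = (S2 * S1) * ((w * T) * T) := by rw [h]
    _ = S2 * (S1 * (w * T) * T) := by noncomm_ring

lemma not_two_shifts [Nontrivial A] (n : ℕ) (hn : 1 ≤ n) (S T : A) (l1 l2 : ℂ)
    (h1 : beta n (S + l1 • 1) T = 0) (h2 : beta n (S + l2 • 1) T = 0) (hne : l1 ≠ l2) :
    False := by
  set d1 : Module.End ℂ A := Lop (S + l1 • 1) T - 1 with hd1
  set d2 : Module.End ℂ A := Lop (S + l2 • 1) T - 1 with hd2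
  have hc12 : Commute d1 d2 :=
    ((Lop_comm_of_comm _ _ T (shift_comm S l1 l2)).sub_left (Commute.one_left _)).sub_right
      (Commute.one_right _)
  set K := 2 * n - 1 with hK
  have hterm : ∀ k ∈ Finset.range (K + 1),
      (d1 ^ k * (-d2) ^ (K - k) * (K.choose k : Module.End ℂ A)) 1 = 0 := by
    intro k hk
    rw [Finset.mem_range] at hk
    have hneg : (-d2) ^ (K - k) = (-1 : Module.End ℂ A) ^ (K - k) * d2 ^ (K - k) := by
      exact neg_pow d2 (K - k)
    rcases le_or_gt n (K - k) with hcase | hcase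
    · rw [Module.End.mul_apply, Module.End.mul_apply, Module.End.natCast_apply, map_nsmul,
        hneg, Module.End.mul_apply]
      have hz : (d2 ^ (K - k)) (1 : A) = 0 := by
        rw [hd2, ← beta_eq]
        exact beta_le_zero _ _ h2 hcase
      rw [hz]
      simp
    · have hkn : n ≤ k := by omega
      have hswap : d1 ^ k * (-d2) ^ (K - k) = (-d2) ^ (K - k) * d1 ^ k :=
        (hc12.neg_right.pow_pow k (K - k)).eq
      rw [Module.End.mul_apply, Module.End.natCast_apply, hswap, Module.End.mul_apply]
      have hz : (d1 ^ k) ((K.choose k : ℕ) • (1 : A)) = 0 := by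
        rw [map_nsmul]
        have : (d1 ^ k) (1 : A) = 0 := by
          rw [hd1, ← beta_eq]
          exact beta_le_zero _ _ h1 hkn
        rw [this, smul_zero]
      rw [hz, map_zero]
  have hdiff : d1 - d2 = (l1 - l2) • Lop 1 T := by
    apply LinearMap.ext
    intro w
    simp only [hd1, hd2, LinearMap.sub_apply, LinearMap.smul_apply, Lop_apply,
      Module.End.one_apply, add_mul, smul_mul_assoc, one_mul, sub_smul]
    abel
  have hzero : ((d1 - d2) ^ K) 1 = 0 := by
    rw [sub_eq_add_neg, (hc12.neg_right).add_pow, LinearMap.sum_apply]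
    exact Finset.sum_eq_zero hterm
  have hval : ((d1 - d2) ^ K) 1 = (l1 - l2) ^ K • T ^ K := by
    rw [hdiff, smul_pow, LinearMap.smul_apply, Lop_pow_one, one_pow, one_mul]
  have hTK : T ^ K = 0 := by
    have := hval ▸ hzero
    exact (smul_eq_zero.mp this).resolve_left (pow_ne_zero _ (sub_ne_zero.mpr hne))
  obtain ⟨G, hG⟩ := exists_left_inv (n - 1) (S + l1 • 1) T
    (by rw [Nat.sub_add_cancel hn]; exact h1)
  have hone := left_inv_pow G T hG K
  rw [hTK, mul_zero] at hone
  exact one_ne_zero hone.symm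

end TwoShifts

set_option maxHeartbeats 1000000
set_option synthInstance.maxHeartbeats 400000

/-- Corollary 6.3: for nonzero complex Banach spaces `X, Y`, `S, T ∈ B(X)` not both
zero and `0 ≠ Q ∈ B(Y)`: the tensor sum `S⊗I + I⊗Q` is a strict left `n`-inverse of
`T⊗I` iff there exist `l, m ≥ 1` with `l + m = n + 1` and `λ ∈ ℂ` such that `S + λI` is
a strict left `l`-inverse of `T` and `Q − λI` is nilpotent of order exactly `m`. -/
theorem strict_inverse_tensor_sum
    {X Y : Type*} [NormedAddCommGroup X] [NormedSpace ℂ X] [CompleteSpace X] [Nontrivial X]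
    [NormedAddCommGroup Y] [NormedSpace ℂ Y] [CompleteSpace Y] [Nontrivial Y]
    (S T : X →L[ℂ] X) (Q : Y →L[ℂ] Y) (hST : ¬(S = 0 ∧ T = 0)) (hQ : Q ≠ 0)
    (n : ℕ) (hn : 1 ≤ n) :
    (beta n (S ⊗ₜ[ℂ] (1 : Y →L[ℂ] Y) + (1 : X →L[ℂ] X) ⊗ₜ[ℂ] Q)
        (T ⊗ₜ[ℂ] (1 : Y →L[ℂ] Y)) = 0 ∧
      beta (n - 1) (S ⊗ₜ[ℂ] (1 : Y →L[ℂ] Y) + (1 : X →L[ℂ] X) ⊗ₜ[ℂ] Q)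
        (T ⊗ₜ[ℂ] (1 : Y →L[ℂ] Y)) ≠ 0) ↔
      ∃ (l m : ℕ) (lam : ℂ), 0 < l ∧ 0 < m ∧ l + m = n + 1 ∧
        (beta l (S + lam • 1) T = 0 ∧ beta (l - 1) (S + lam • 1) T ≠ 0) ∧
        ((Q - lam • 1) ^ m = 0 ∧ (Q - lam • 1) ^ (m - 1) ≠ 0) := by
  classical
  obtain ⟨p, rfl⟩ : ∃ p, n = p + 1 := ⟨n - 1, by omega⟩
  haveI hntX : Nontrivial (X →L[ℂ] X) := by
    refine ⟨1, 0, fun h => ?_⟩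
    obtain ⟨x, hx⟩ := exists_ne (0 : X)
    exact hx (by simpa using DFunLike.congr_fun h x)
  haveI hntY : Nontrivial (Y →L[ℂ] Y) := by
    refine ⟨1, 0, fun h => ?_⟩
    obtain ⟨y, hy⟩ := exists_ne (0 : Y)
    exact hy (by simpa using DFunLike.congr_fun h y)
  simp only [Nat.add_sub_cancel]
  constructor
  · rintro ⟨hb, hb'⟩
    obtain ⟨lam, hlam⟩ := spectrum.nonempty Q
    have hspec : ∀ μ, μ ∈ spectrum ℂ Q → beta (p + 1) (S + μ • 1) T = 0 := by
      intro μ hμ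
      by_contra hβ
      obtain ⟨φ, -, hφ⟩ := exists_dual_vector ℂ (beta (p + 1) (S + μ • 1) T) (norm_ne_zero_iff.mpr hβ)
      have hexp := beta_tensor_expand (p + 1) (S + μ • 1) T (Q - μ • 1)
      rw [← tensor_shift S Q μ, hb] at hexp
      have h0 := congrArg (applyL φ.toLinearMap) hexp
      rw [map_zero, map_sum] at h0
      set a : ℕ → ℂ := fun k =>
        ((p + 1).choose k : ℂ) * φ (beta k (S + μ • 1) T * T ^ (p + 1 - k)) with hadef
      have hterm : ∀ k ∈ Finset.range (p + 1 + 1),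
          applyL φ.toLinearMap ((p + 1).choose k •
            ((beta k (S + μ • 1) T * T ^ (p + 1 - k)) ⊗ₜ[ℂ] ((Q - μ • 1) ^ (p + 1 - k))))
          = a k • (Q - μ • 1) ^ (p + 1 - k) := by
        intro k hk
        rw [map_nsmul, applyL_tmul, ← Nat.cast_smul_eq_nsmul ℂ, smul_smul]
        simp only [hadef, ContinuousLinearMap.coe_coe]
      rw [Finset.sum_congr rfl hterm] at h0
      have haK : a (p + 1) ≠ 0 := by
        rw [hadef]
        simp only [Nat.choose_self, Nat.cast_one, one_mul, Nat.sub_self, pow_zero, mul_one]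
        rw [hφ]
        simpa using norm_ne_zero_iff.mpr hβ
      have hunit := isUnit_of_poly_rev (Q - μ • 1) (p + 1) a h0.symm haK
      apply spectrum.mem_iff.mp hμ
      have heq : algebraMap ℂ (Y →L[ℂ] Y) μ - Q = -(Q - μ • 1) := by
        rw [Algebra.algebraMap_eq_smul_one]
        abel
      rw [heq]
      exact hunit.neg
    have hβlam := hspec lam hlam
    have hsig : ∀ μ ∈ spectrum ℂ Q, μ = lam := by
      intro μ hμ
      by_contra hne
      exact not_two_shifts (p + 1) (by omega) S T μ lam (hspec μ hμ) hβlam hne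
    have hex : ∃ j, beta j (S + lam • 1) T = 0 := ⟨p + 1, hβlam⟩
    set l := Nat.find hex with hldef
    have hl : beta l (S + lam • 1) T = 0 := Nat.find_spec hex
    have hlle : l ≤ p + 1 := Nat.find_le hβlam
    have hl0 : 0 < l := by
      rcases Nat.eq_zero_or_pos l with h0 | h0
      · exfalso
        rw [h0, beta_zero] at hl
        exact one_ne_zero hl
      · exact h0
    have hbl' : beta (l - 1) (S + lam • 1) T ≠ 0 := Nat.find_min hex (by omega)
    set m := p + 2 - l with hmdef
    have hm0 : 0 < m := by omega
    have hlm : l + m = p + 2 := by omega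
    have hw : beta (l - 1) (S + lam • 1) T * T ^ m ≠ 0 := by
      intro h0
      apply hbl'
      have hpump := beta_pred_pump (l - 1) (S + lam • 1) T
        (by rw [Nat.sub_add_cancel hl0]; exact hl) m
      rw [h0, mul_zero] at hpump
      exact hpump
    obtain ⟨φ, -, hφ⟩ := exists_dual_vector ℂ _ (norm_ne_zero_iff.mpr hw)
    have hexp := beta_tensor_expand (p + 1) (S + lam • 1) T (Q - lam • 1)
    rw [← tensor_shift S Q lam, hb] at hexp
    have h0 := congrArg (applyL φ.toLinearMap) hexp
    rw [map_zero, map_sum] at h0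
    set a : ℕ → ℂ := fun k =>
      ((p + 1).choose k : ℂ) * φ (beta k (S + lam • 1) T * T ^ (p + 1 - k)) with hadef
    have hterm : ∀ k ∈ Finset.range (p + 1 + 1),
        applyL φ.toLinearMap ((p + 1).choose k •
          ((beta k (S + lam • 1) T * T ^ (p + 1 - k)) ⊗ₜ[ℂ] ((Q - lam • 1) ^ (p + 1 - k))))
        = a k • (Q - lam • 1) ^ (p + 1 - k) := by
      intro k hk
      rw [map_nsmul, applyL_tmul, ← Nat.cast_smul_eq_nsmul ℂ, smul_smul]
      simp only [hadef, ContinuousLinearMap.coe_coe]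
    rw [Finset.sum_congr rfl hterm] at h0
    have hzero_out : ∀ k ∈ Finset.range (p + 1 + 1), k ∉ Finset.range l →
        a k • (Q - lam • 1) ^ (p + 1 - k) = 0 := by
      intro k _ hk
      rw [Finset.mem_range, not_lt] at hk
      have hβk : beta k (S + lam • 1) T = 0 := beta_le_zero _ _ hl hk
      rw [hadef]
      simp only [hβk, zero_mul, map_zero, mul_zero, zero_smul]
    have hsum_l : ∑ k ∈ Finset.range l, a k • (Q - lam • 1) ^ (p + 1 - k) = 0 := by
      rw [Finset.sum_subset (Finset.range_subset_range.mpr (by omega : l ≤ p + 1 + 1)) hzero_out]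
      exact h0.symm
    have hfac : ∀ k ∈ Finset.range l, a k • (Q - lam • 1) ^ (p + 1 - k)
        = (Q - lam • 1) ^ m * (a k • (Q - lam • 1) ^ (l - 1 - k)) := by
      intro k hk
      rw [Finset.mem_range] at hk
      rw [mul_smul_comm, ← pow_add]
      have : p + 1 - k = m + (l - 1 - k) := by omega
      rw [this]
    rw [Finset.sum_congr rfl hfac, ← Finset.mul_sum] at hsum_l
    set r : Polynomial ℂ :=
      ∑ k ∈ Finset.range l, Polynomial.C (a k) * Polynomial.X ^ (l - 1 - k) with hrdef
    have haev : Polynomial.aeval (Q - lam • 1) r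
        = ∑ k ∈ Finset.range l, a k • (Q - lam • 1) ^ (l - 1 - k) := by
      rw [hrdef, map_sum]
      refine Finset.sum_congr rfl fun k hk => ?_
      rw [map_mul, Polynomial.aeval_C, Polynomial.aeval_X_pow, ← Algebra.smul_def]
    have hr0 : r.coeff 0 = a (l - 1) := by
      rw [hrdef, Polynomial.finset_sum_coeff]
      rw [Finset.sum_eq_single_of_mem (l - 1) (by rw [Finset.mem_range]; omega)]
      · rw [Polynomial.coeff_C_mul, Polynomial.coeff_X_pow]
        simp
      · intro k hk hne
        rw [Finset.mem_range] at hk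
        rw [Polynomial.coeff_C_mul, Polynomial.coeff_X_pow]
        have h1 : ¬(0 = l - 1 - k) := by omega
        simp [h1]
    have hr0ne : r.coeff 0 ≠ 0 := by
      rw [hr0, hadef]
      simp only []
      have hexpm : p + 1 - (l - 1) = m := by omega
      rw [hexpm, hφ]
      refine mul_ne_zero ?_ ?_
      · exact_mod_cast (Nat.choose_pos (by omega : l - 1 ≤ p + 1)).ne'
      · simpa using norm_ne_zero_iff.mpr hw
    have hunit : ∀ ρ : ℂ, ρ ≠ 0 → IsUnit (algebraMap ℂ (Y →L[ℂ] Y) ρ - (Q - lam • 1)) := by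
      intro ρ hρ
      by_contra hcon
      have hmem : ρ + lam ∈ spectrum ℂ Q := by
        rw [spectrum.mem_iff]
        intro hcon2
        apply hcon
        have heq : algebraMap ℂ (Y →L[ℂ] Y) (ρ + lam) - Q
            = algebraMap ℂ (Y →L[ℂ] Y) ρ - (Q - lam • 1) := by
          rw [Algebra.algebraMap_eq_smul_one, Algebra.algebraMap_eq_smul_one, add_smul]
          abel
        rw [← heq]
        exact hcon2
      have := hsig (ρ + lam) hmem
      exact hρ (by linear_combination this)
    have hNm : (Q - lam • 1) ^ m = 0 := by
      refine pow_eq_zero_of_aeval (Q - lam • 1) m hunit r.natDegree r le_rfl hr0ne ?_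
      rw [haev]
      exact hsum_l
    have hNm' : (Q - lam • 1) ^ (m - 1) ≠ 0 := by
      intro hzero
      apply hb'
      have hexp2 := beta_tensor_expand p (S + lam • 1) T (Q - lam • 1)
      rw [← tensor_shift S Q lam] at hexp2
      rw [hexp2]
      apply Finset.sum_eq_zero
      intro k hk
      rw [Finset.mem_range] at hk
      rcases le_or_gt l k with hcase | hcase
      · rw [beta_le_zero _ _ hl hcase, zero_mul, TensorProduct.zero_tmul, smul_zero]
      · have : m - 1 ≤ p - k := by omega
        rw [pow_zero_of_le hzero this, TensorProduct.tmul_zero, smul_zero]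
    exact ⟨l, m, lam, hl0, hm0, by omega, ⟨hl, hbl'⟩, hNm, hNm'⟩
  · rintro ⟨l, m, lam, hl0, hm0, hlm, ⟨hbl, hbl'⟩, hNm, hNm'⟩
    have hE1 := beta_tensor_expand (p + 1) (S + lam • 1) T (Q - lam • 1)
    have hE2 := beta_tensor_expand p (S + lam • 1) T (Q - lam • 1)
    rw [← tensor_shift S Q lam] at hE1 hE2
    constructor
    · rw [hE1]
      apply Finset.sum_eq_zero
      intro k hk
      rw [Finset.mem_range] at hk
      rcases le_or_gt l k with hcase | hcase
      · rw [beta_le_zero _ _ hbl hcase, zero_mul, TensorProduct.zero_tmul, smul_zero]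
      · have : m ≤ p + 1 - k := by omega
        rw [pow_zero_of_le hNm this, TensorProduct.tmul_zero, smul_zero]
    · rw [hE2]
      have hmem : l - 1 ∈ Finset.range (p + 1) := by
        rw [Finset.mem_range]; omega
      have hside : ∀ k ∈ Finset.range (p + 1), k ≠ l - 1 →
          p.choose k • ((beta k (S + lam • 1) T * T ^ (p - k)) ⊗ₜ[ℂ]
            ((Q - lam • 1) ^ (p - k))) = 0 := by
        intro k hk hne
        rw [Finset.mem_range] at hk
        rcases le_or_gt l k with hcase | hcase
        · rw [beta_le_zero _ _ hbl hcase, zero_mul, TensorProduct.zero_tmul, smul_zero]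
        · have : m ≤ p - k := by omega
          rw [pow_zero_of_le hNm this, TensorProduct.tmul_zero, smul_zero]
      rw [Finset.sum_eq_single_of_mem (l - 1) hmem hside]
      have hexp : p - (l - 1) = m - 1 := by omega
      rw [hexp]
      have hβT : beta (l - 1) (S + lam • 1) T * T ^ (m - 1) ≠ 0 := by
        intro hzero
        apply hbl'
        have hpump := beta_pred_pump (l - 1) (S + lam • 1) T
          (by rw [Nat.sub_add_cancel hl0]; exact hbl) (m - 1)
        rw [hzero, mul_zero] at hpump
        exact hpump
      have htm := tmul_ne_zero hβT hNm'
      intro hcon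
      rw [← Nat.cast_smul_eq_nsmul ℂ] at hcon
      have hch : ((p.choose (l - 1) : ℂ)) ≠ 0 := by
        exact_mod_cast (Nat.choose_pos (by omega : l - 1 ≤ p)).ne'
      exact htm ((smul_eq_zero.mp hcon).resolve_left hch)
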